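/- A finite tree admits a perfect matching if and only if every vertex belongs to every maximum matching and is always covered by the same edge in every maximum matching (i.e., all vertices are 'orange' in the canonical coloring). -/

import Mathlib

open scoped Classical

/-- A matching of a graph `G`: a set of edges of `G`, pairwise vertex-disjoint. -/
def IsMatching {V : Type} (G : SimpleGraph V) (M : Finset (Sym2 V)) : Prop :=
  (∀ e ∈ M, e ∈ G.edgeSet) ∧
  ∀ e ∈ M, ∀ f ∈ M, e ≠ f → ∀ v : V, v ∈ e → v ∉ f

/-- A vertex is covered by a matching if it belongs to some edge of it. -/
def Covers {V : Type} (M : Finset (Sym2 V)) (v : V) : Prop := ∃ e ∈ M, v ∈ e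

/-- A maximum matching: a matching of maximal cardinality. -/
def IsMaxMatching {V : Type} [Fintype V] (G : SimpleGraph V) (M : Finset (Sym2 V)) : Prop :=
  IsMatching G M ∧ ∀ M' : Finset (Sym2 V), IsMatching G M' → M'.card ≤ M.card

/-- An orange vertex: it is covered by every maximum matching, always by the same edge. -/
def IsOrangeVertex {V : Type} [Fintype V] (G : SimpleGraph V) (v : V) : Prop :=
  ∃ e : Sym2 V, ∀ M : Finset (Sym2 V), IsMaxMatching G M → e ∈ M ∧ v ∈ e

section Aux

variable {V : Type} [Fintype V] [DecidableEq V]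

/-- A finite set with a fixed-point-free involution has even cardinality. -/
lemma even_card_of_invol : ∀ (S : Finset V) (i : V → V),
    (∀ v ∈ S, i v ∈ S ∧ i v ≠ v ∧ i (i v) = v) → Even S.card := by
  intro S
  induction S using Finset.strongInduction with
  | _ S ih =>
    intro i hi
    rcases S.eq_empty_or_nonempty with rfl | ⟨v, hv⟩
    · simp
    · obtain ⟨hivS, hivv, hiiv⟩ := hi v hv
      have hmem : i v ∈ S.erase v := Finset.mem_erase.mpr ⟨hivv, hivS⟩
      set S' := (S.erase v).erase (i v) with hS'
      have hsub' : S' ⊆ S := (Finset.erase_subset _ _).trans (Finset.erase_subset _ _)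
      have hvS' : v ∉ S' := by
        intro h
        exact (Finset.mem_erase.mp (Finset.mem_erase.mp h).2).1 rfl
      have hsub : S' ⊂ S := (Finset.ssubset_iff_of_subset hsub').mpr ⟨v, hv, hvS'⟩
      have c1 : (S.erase v).card + 1 = S.card := Finset.card_erase_add_one hv
      have c2 : S'.card + 1 = (S.erase v).card := Finset.card_erase_add_one hmem
      have hinv : ∀ u ∈ S', i u ∈ S' ∧ i u ≠ u ∧ i (i u) = u := by
        intro u hu
        obtain ⟨huiv, hrest⟩ := Finset.mem_erase.mp hu
        obtain ⟨huv, huS⟩ := Finset.mem_erase.mp hrest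
        obtain ⟨h1, h2, h3⟩ := hi u huS
        refine ⟨Finset.mem_erase.mpr ⟨?_, Finset.mem_erase.mpr ⟨?_, h1⟩⟩, h2, h3⟩
        · intro h
          apply huv
          have := congrArg i h
          rwa [h3, hiiv] at this
        · intro h
          apply huiv
          have := congrArg i h
          rwa [h3] at this
      obtain ⟨k, hk⟩ := ih S' hsub i hinv
      exact ⟨k + 1, by omega⟩

variable {G : SimpleGraph V}

lemma ends_card {e : Sym2 V} (he : e ∈ G.edgeSet) :
    (Finset.univ.filter (· ∈ e)).card = 2 := by
  obtain ⟨a, b, rfl⟩ : ∃ a b, e = s(a, b) :=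
    Sym2.ind (fun a b => ⟨a, b, rfl⟩) e
  have hab : a ≠ b := G.ne_of_adj ((G.mem_edgeSet).mp he)
  have hfil : Finset.univ.filter (· ∈ s(a, b)) = {a, b} := by
    ext v
    simp [Sym2.mem_iff]
  rw [hfil, Finset.card_insert_of_notMem (by simp [hab]), Finset.card_singleton]

lemma covered_card {M : Finset (Sym2 V)} (hM : IsMatching G M) :
    (M.biUnion (fun e => Finset.univ.filter (· ∈ e))).card = 2 * M.card := by
  rw [Finset.card_biUnion]
  · rw [Finset.sum_congr rfl (fun e he => ends_card (hM.1 e he))]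
    simp [mul_comm]
  · intro e he f hf hef
    apply Finset.disjoint_left.mpr
    intro v hv hv'
    exact hM.2 e he f hf hef v (Finset.mem_filter.mp hv).2 (Finset.mem_filter.mp hv').2

lemma covers_univ {M : Finset (Sym2 V)} (h : ∀ v, Covers M v) :
    M.biUnion (fun e => Finset.univ.filter (· ∈ e)) = Finset.univ := by
  apply Finset.eq_univ_of_forall
  intro v
  obtain ⟨e, he, hv⟩ := h v
  exact Finset.mem_biUnion.mpr ⟨e, he, Finset.mem_filter.mpr ⟨Finset.mem_univ _, hv⟩⟩

/-- If a perfect matching exists, every maximum matching is perfect. -/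
lemma max_perfect {M M' : Finset (Sym2 V)} (hM : IsMatching G M) (hMc : ∀ v, Covers M v)
    (hM' : IsMaxMatching G M') : ∀ v, Covers M' v := by
  have h1 : 2 * M.card = Fintype.card V := by
    rw [← covered_card hM, covers_univ hMc, Finset.card_univ]
  have h2 : 2 * M'.card ≤ Fintype.card V := by
    rw [← covered_card hM'.1]
    exact (Finset.card_le_univ _).trans_eq Finset.card_univ
  have h3 : M.card ≤ M'.card := hM'.2 M hM
  have h4 : (M'.biUnion (fun e => Finset.univ.filter (· ∈ e))).card = Fintype.card V := by
    rw [covered_card hM'.1]; omega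
  have h5 := Finset.eq_univ_of_card _ h4
  intro v
  have hv : v ∈ M'.biUnion (fun e => Finset.univ.filter (· ∈ e)) := by
    rw [h5]; exact Finset.mem_univ v
  obtain ⟨e, he, hve⟩ := Finset.mem_biUnion.mp hv
  exact ⟨e, he, (Finset.mem_filter.mp hve).2⟩

/-- The partner function of a perfect matching. -/
lemma partner {M : Finset (Sym2 V)} (hM : IsMatching G M) (hMc : ∀ v, Covers M v) :
    ∃ p : V → V, ∀ v, s(v, p v) ∈ M ∧ p v ≠ v ∧ p (p v) = v ∧
      ∀ f ∈ M, v ∈ f → f = s(v, p v) := by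
  have hex : ∀ v : V, ∃ u, s(v, u) ∈ M := by
    intro v
    obtain ⟨e, he, hv⟩ := hMc v
    exact ⟨Sym2.Mem.other' hv, by rwa [Sym2.other_spec' hv]⟩
  choose p hp using hex
  have huniq : ∀ v, ∀ f ∈ M, v ∈ f → f = s(v, p v) := by
    intro v f hf hvf
    by_contra hne
    exact hM.2 f hf _ (hp v) hne v hvf (Sym2.mem_mk_left v (p v))
  have hne : ∀ v, p v ≠ v := by
    intro v h
    have hadj := (G.mem_edgeSet).mp (hM.1 _ (hp v))
    exact G.ne_of_adj hadj h.symm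
  refine ⟨p, fun v => ⟨hp v, hne v, ?_, huniq v⟩⟩
  have h2 := huniq (p v) _ (hp v) (Sym2.mem_mk_right v (p v))
  rw [Sym2.eq_iff] at h2
  rcases h2 with ⟨h, -⟩ | ⟨h, -⟩
  · exact absurd h.symm (hne v)
  · exact h.symm

/-- Uniqueness of the perfect matching of a tree (one inclusion). -/
lemma mem_of_pm (hT : G.IsTree) {M M' : Finset (Sym2 V)}
    (hM : IsMatching G M) (hMc : ∀ v, Covers M v)
    (hM' : IsMatching G M') (hMc' : ∀ v, Covers M' v)
    {e : Sym2 V} (he : e ∈ M) : e ∈ M' := by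
  obtain ⟨a, b, rfl⟩ : ∃ a b, e = s(a, b) :=
    Sym2.ind (fun a b => ⟨a, b, rfl⟩) e
  by_contra hne'
  have hadj : G.Adj a b := (G.mem_edgeSet).mp (hM.1 _ he)
  have hbridge := (SimpleGraph.isAcyclic_iff_forall_adj_isBridge.mp hT.2) hadj
  have hnr : ¬ (G \ SimpleGraph.fromEdgeSet {s(a, b)}).Reachable a b :=
    SimpleGraph.isBridge_iff.mp hbridge
  set G' := G \ SimpleGraph.fromEdgeSet {s(a, b)} with hG'
  set A := Finset.univ.filter (fun v => G'.Reachable a v) with hA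
  have haA : a ∈ A := Finset.mem_filter.mpr ⟨Finset.mem_univ _, SimpleGraph.Reachable.refl a⟩
  have hbA : b ∉ A := fun h => hnr ((Finset.mem_filter.mp h).2)
  have hstep : ∀ v u : V, v ∈ A → s(v, u) ∈ G.edgeSet → s(v, u) ≠ s(a, b) → u ∈ A := by
    intro v u hvA hvu hne
    have hadj' : G'.Adj v u := by
      rw [hG']
      have hGvu : G.Adj v u := (G.mem_edgeSet).mp hvu
      simp [SimpleGraph.fromEdgeSet_adj, hGvu, hne]
    refine Finset.mem_filter.mpr ⟨Finset.mem_univ _, ?_⟩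
    exact ((Finset.mem_filter.mp hvA).2).trans hadj'.reachable
  obtain ⟨p, hp⟩ := partner hM hMc
  obtain ⟨q, hq⟩ := partner hM' hMc'
  have hEM : Even ((A.erase a).card) := by
    apply even_card_of_invol _ p
    intro v hv
    obtain ⟨hva, hvA⟩ := Finset.mem_erase.mp hv
    obtain ⟨hpv, hpvne, hppv, -⟩ := hp v
    have hfe : s(v, p v) ≠ s(a, b) := by
      intro h
      have hv' : v ∈ s(a, b) := h ▸ Sym2.mem_mk_left v (p v)
      rcases Sym2.mem_iff.mp hv' with rfl | rfl
      · exact hva rfl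
      · exact hbA hvA
    have hpA : p v ∈ A := hstep v (p v) hvA (hM.1 _ hpv) hfe
    refine ⟨Finset.mem_erase.mpr ⟨?_, hpA⟩, hpvne, hppv⟩
    intro h
    exact (hM.2 _ he _ hpv (Ne.symm hfe) a (Sym2.mem_mk_left a b))
      (h ▸ Sym2.mem_mk_right v (p v))
  have hEM' : Even (A.card) := by
    apply even_card_of_invol _ q
    intro v hvA
    obtain ⟨hqv, hqvne, hqqv, -⟩ := hq v
    have hfe : s(v, q v) ≠ s(a, b) := fun h => hne' (h ▸ hqv)
    exact ⟨hstep v (q v) hvA (hM'.1 _ hqv) hfe, hqvne, hqqv⟩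
  have hc : (A.erase a).card + 1 = A.card := Finset.card_erase_add_one haA
  obtain ⟨k, hk⟩ := hEM
  obtain ⟨l, hl⟩ := hEM'
  omega

lemma pm_unique (hT : G.IsTree) {M M' : Finset (Sym2 V)}
    (hM : IsMatching G M) (hMc : ∀ v, Covers M v)
    (hM' : IsMatching G M') (hMc' : ∀ v, Covers M' v) : M = M' :=
  Finset.Subset.antisymm (fun _ he => mem_of_pm hT hM hMc hM' hMc' he)
    (fun _ he => mem_of_pm hT hM' hMc' hM hMc he)

end Aux

/-- A finite tree admits a perfect matching iff all its vertices are orange. -/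
theorem tree_perfect_matching_iff_all_orange {V : Type} [Fintype V] [DecidableEq V]
    (G : SimpleGraph V) (hT : G.IsTree) :
    (∃ M : Finset (Sym2 V), IsMatching G M ∧ ∀ v : V, Covers M v) ↔
      ∀ v : V, IsOrangeVertex G v := by
  constructor
  · rintro ⟨M, hM, hMc⟩ v
    obtain ⟨p, hp⟩ := partner hM hMc
    refine ⟨s(v, p v), fun M' hM' => ?_⟩
    have hMc' := max_perfect hM hMc hM'
    have heq : M = M' := pm_unique hT hM hMc hM'.1 hMc'
    exact ⟨heq ▸ (hp v).1, Sym2.mem_mk_left v (p v)⟩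
  · intro h
    have hempty : IsMatching G (∅ : Finset (Sym2 V)) := by
      constructor <;> simp
    obtain ⟨M, hMmem, hMmax⟩ := Finset.exists_max_image
      ((Finset.univ : Finset (Finset (Sym2 V))).filter (fun N => IsMatching G N))
      Finset.card
      ⟨∅, Finset.mem_filter.mpr ⟨Finset.mem_univ _, hempty⟩⟩
    have hM : IsMatching G M := (Finset.mem_filter.mp hMmem).2
    have hmax : IsMaxMatching G M :=
      ⟨hM, fun N hN => hMmax N (Finset.mem_filter.mpr ⟨Finset.mem_univ _, hN⟩)⟩
    refine ⟨M, hM, fun v => ?_⟩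
    obtain ⟨e, he⟩ := h v
    obtain ⟨h1, h2⟩ := he M hmax
    exact ⟨e, h1, h2⟩
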